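/- Let Λ ∈ L^∞(ℝ) and suppose there is a constant C such that for every finitely supported sequence φ : ℤ → ℂ the function ξ ↦ Σ_{n∈ℤ} φ(n) Λ(ξ−n) has L^∞ norm at most C·sup_n |φ(n)|. Then ess sup_ξ Σ_{n∈ℤ} |Λ(ξ+n)| ≤ C. -/

import Mathlib

open MeasureTheory Complex Real FourierTransform
open scoped ENNReal NNReal

noncomputable section

namespace Stmt1Aux

def c (p : ℚ × ℚ) : ℂ := (p.1 : ℝ) + (p.2 : ℝ) * Complex.I

lemma c_zero : c 0 = 0 := by simp [c]

lemma exists_c_near (w : ℂ) {ε : ℝ} (hε : 0 < ε) : ∃ p : ℚ × ℚ, ‖c p - w‖ < ε := by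
  obtain ⟨a, ha⟩ := exists_rat_near w.re (half_pos hε)
  obtain ⟨b, hb⟩ := exists_rat_near w.im (half_pos hε)
  refine ⟨(a, b), lt_of_le_of_lt (Complex.norm_le_abs_re_add_abs_im _) ?_⟩
  have hre : (c (a, b) - w).re = (a : ℝ) - w.re := by simp [c]
  have him : (c (a, b) - w).im = (b : ℝ) - w.im := by simp [c]
  rw [hre, him]
  calc |(a:ℝ) - w.re| + |(b:ℝ) - w.im| < ε/2 + ε/2 :=
        add_lt_add (by rw [abs_sub_comm]; exact ha) (by rw [abs_sub_comm]; exact hb)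
    _ = ε := by ring

lemma w_mul (z : ℂ) :
    (if z = 0 then 0 else (starRingEnd ℂ) z / (‖z‖ : ℂ)) * z = (‖z‖ : ℝ) := by
  split_ifs with hz
  · simp [hz]
  · have hnz : (‖z‖ : ℂ) ≠ 0 := by
      simpa using norm_ne_zero_iff.mpr hz
    field_simp
    rw [mul_comm, Complex.mul_conj]
    norm_cast
    rw [Complex.normSq_eq_norm_sq, sq]

lemma w_norm_le (z : ℂ) :
    ‖(if z = 0 then 0 else (starRingEnd ℂ) z / (‖z‖ : ℂ))‖ ≤ 1 := by
  split_ifs with hz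
  · simp
  · rw [norm_div]
    simp only [RingHomIsometric.norm_map]
    rw [Complex.norm_real, Real.norm_of_nonneg (norm_nonneg _)]
    rw [div_self (norm_ne_zero_iff.mpr hz)]

end Stmt1Aux

open Stmt1Aux

theorem stmt1 (Λ : ℝ → ℂ) (hΛ : MemLp Λ ⊤ volume) (C : ℝ) (hC : 0 ≤ C)
    (h : ∀ φ : ℤ → ℂ, (Function.support φ).Finite → ∀ B : ℝ, (∀ n : ℤ, ‖φ n‖ ≤ B) →
      eLpNorm (fun ξ : ℝ => ∑' n : ℤ, φ n * Λ (ξ - (n : ℝ))) ⊤ volume ≤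
        ENNReal.ofReal (C * B)) :
    essSup (fun ξ : ℝ => ∑' n : ℤ, (‖Λ (ξ + (n : ℝ))‖₊ : ℝ≥0∞)) volume ≤
      ENNReal.ofReal C := by
  have key : ∀ᵐ ξ ∂(volume : Measure ℝ), ∀ p : (ℤ →₀ ℚ × ℚ) × ℚ,
      (∀ n : ℤ, ‖c (p.1 n)‖ ≤ (p.2 : ℝ)) →
      ‖∑' n : ℤ, c (p.1 n) * Λ (ξ - (n : ℝ))‖ ≤ C * (p.2 : ℝ) := by
    rw [ae_all_iff]
    intro p
    by_cases hp : ∀ n : ℤ, ‖c (p.1 n)‖ ≤ (p.2 : ℝ)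
    · have hb : (0 : ℝ) ≤ (p.2 : ℝ) := le_trans (norm_nonneg _) (hp 0)
      have hsupp : (Function.support fun n : ℤ => c (p.1 n)).Finite := by
        apply p.1.finite_support.subset
        intro n hn
        simp only [Function.mem_support, Finsupp.fun_support_eq, Finset.mem_coe,
          Finsupp.mem_support_iff] at *
        intro h0
        exact hn (h0 ▸ c_zero)
      have hh := h (fun n => c (p.1 n)) hsupp (p.2 : ℝ) hp
      rw [eLpNorm_exponent_top] at hh
      filter_upwards [ae_le_eLpNormEssSup
        (f := fun ξ : ℝ => ∑' n : ℤ, c (p.1 n) * Λ (ξ - (n : ℝ))) (μ := volume)] with ξ hξ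
      intro _
      have h2 : (‖∑' n : ℤ, c (p.1 n) * Λ (ξ - (n : ℝ))‖₊ : ℝ≥0∞) ≤
          ENNReal.ofReal (C * (p.2 : ℝ)) := le_trans hξ hh
      rw [← (ofReal_norm _).trans (enorm_eq_nnnorm _),
        ENNReal.ofReal_le_ofReal_iff (by positivity)] at h2
      exact h2
    · filter_upwards with ξ hp'
      exact absurd hp' hp
  apply essSup_le_of_ae_le (hfbdd := by isBoundedDefault)
  filter_upwards [key] with ξ hξ
  rw [ENNReal.tsum_eq_iSup_sum]
  refine iSup_le fun F => ?_
  have hsum : ∑ n ∈ F, (‖Λ (ξ + (n : ℝ))‖₊ : ℝ≥0∞) =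
      ENNReal.ofReal (∑ n ∈ F, ‖Λ (ξ + (n : ℝ))‖) := by
    rw [ENNReal.ofReal_sum_of_nonneg (fun n _ => norm_nonneg _)]
    exact Finset.sum_congr rfl fun n _ => ((ofReal_norm _).trans (enorm_eq_nnnorm _)).symm
  rw [hsum]
  apply ENNReal.ofReal_le_ofReal
  set S := ∑ n ∈ F, ‖Λ (ξ + (n : ℝ))‖ with hS
  have hS0 : 0 ≤ S := Finset.sum_nonneg fun n _ => norm_nonneg _
  -- main claim
  have claim : ∀ ε : ℚ, 0 < ε → S ≤ C * (1 + (ε : ℝ)) + (ε : ℝ) * S := by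
    intro ε hε
    have hεR : (0 : ℝ) < (ε : ℝ) := by exact_mod_cast hε
    set G := F.image (fun n : ℤ => -n) with hG
    set w : ℤ → ℂ := fun n =>
      if Λ (ξ - (n : ℝ)) = 0 then 0 else
        (starRingEnd ℂ) (Λ (ξ - (n : ℝ))) / (‖Λ (ξ - (n : ℝ))‖ : ℂ) with hw
    choose q hq using fun n : ℤ => exists_c_near (w n) hεR
    set φ₀ : ℤ →₀ ℚ × ℚ := Finsupp.onFinset G (fun n => if n ∈ G then q n else 0)
      (by intro n hn; by_contra hmem; simp [hmem] at hn) with hφ₀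
    have hφ₀app : ∀ n, φ₀ n = if n ∈ G then q n else 0 := fun n => rfl
    have hbound : ∀ n : ℤ, ‖c (φ₀ n)‖ ≤ ((1 + ε : ℚ) : ℝ) := by
      intro n
      rw [hφ₀app]
      split_ifs with hn
      · calc ‖c (q n)‖ = ‖w n + (c (q n) - w n)‖ := by ring_nf
          _ ≤ ‖w n‖ + ‖c (q n) - w n‖ := norm_add_le _ _
          _ ≤ 1 + (ε : ℝ) := add_le_add (w_norm_le _) (hq n).le
          _ = ((1 + ε : ℚ) : ℝ) := by push_cast; ring
      · rw [c_zero]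
        simp only [norm_zero]
        push_cast
        linarith
    have hkey := hξ (φ₀, (1 + ε : ℚ)) hbound
    simp only at hkey
    have htsum : ∑' n : ℤ, c (φ₀ n) * Λ (ξ - (n : ℝ)) =
        ∑ n ∈ G, c (φ₀ n) * Λ (ξ - (n : ℝ)) := by
      apply tsum_eq_sum
      intro n hn
      rw [hφ₀app, if_neg hn, c_zero, zero_mul]
    rw [htsum] at hkey
    -- S as a sum over G
    have hSG : S = ∑ n ∈ G, ‖Λ (ξ - (n : ℝ))‖ := by
      rw [hG, Finset.sum_image (fun a _ b _ hab => neg_injective hab)]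
      apply Finset.sum_congr rfl
      intro n _
      congr 1
      push_cast
      ring
    have hScast : (S : ℂ) = ∑ n ∈ G, w n * Λ (ξ - (n : ℝ)) := by
      rw [hSG]
      push_cast
      apply Finset.sum_congr rfl
      intro n _
      exact (w_mul (Λ (ξ - (n : ℝ)))).symm
    have hsplit : ∑ n ∈ G, w n * Λ (ξ - (n : ℝ)) =
        (∑ n ∈ G, c (φ₀ n) * Λ (ξ - (n : ℝ))) +
        ∑ n ∈ G, (w n - c (φ₀ n)) * Λ (ξ - (n : ℝ)) := by
      rw [← Finset.sum_add_distrib]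
      apply Finset.sum_congr rfl
      intro n _
      ring
    have herr : ‖∑ n ∈ G, (w n - c (φ₀ n)) * Λ (ξ - (n : ℝ))‖ ≤ (ε : ℝ) * S := by
      calc ‖∑ n ∈ G, (w n - c (φ₀ n)) * Λ (ξ - (n : ℝ))‖
          ≤ ∑ n ∈ G, ‖(w n - c (φ₀ n)) * Λ (ξ - (n : ℝ))‖ := norm_sum_le _ _
        _ ≤ ∑ n ∈ G, (ε : ℝ) * ‖Λ (ξ - (n : ℝ))‖ := by
            apply Finset.sum_le_sum
            intro n hn
            rw [norm_mul]
            apply mul_le_mul_of_nonneg_right _ (norm_nonneg _)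
            rw [hφ₀app, if_pos hn, ← norm_neg]
            simpa [neg_sub] using (hq n).le
        _ = (ε : ℝ) * S := by rw [hSG, Finset.mul_sum]
    have : S ≤ C * ((1 + ε : ℚ) : ℝ) + (ε : ℝ) * S := by
      calc S = ‖(S : ℂ)‖ := by
            rw [Complex.norm_real, Real.norm_of_nonneg hS0]
        _ = ‖(∑ n ∈ G, c (φ₀ n) * Λ (ξ - (n : ℝ))) +
              ∑ n ∈ G, (w n - c (φ₀ n)) * Λ (ξ - (n : ℝ))‖ := by
            rw [hScast, hsplit]
        _ ≤ ‖∑ n ∈ G, c (φ₀ n) * Λ (ξ - (n : ℝ))‖ +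
              ‖∑ n ∈ G, (w n - c (φ₀ n)) * Λ (ξ - (n : ℝ))‖ := norm_add_le _ _
        _ ≤ C * ((1 + ε : ℚ) : ℝ) + (ε : ℝ) * S := add_le_add hkey herr
    calc S ≤ C * ((1 + ε : ℚ) : ℝ) + (ε : ℝ) * S := this
      _ = C * (1 + (ε : ℝ)) + (ε : ℝ) * S := by push_cast; ring
  -- conclude S ≤ C
  by_contra hSC
  push_neg at hSC
  have hpos : (0 : ℝ) < (S - C) / (C + S + 1) := by
    apply div_pos (by linarith) (by linarith)
  obtain ⟨ε, hε0, hε1⟩ := exists_rat_btwn hpos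
  have hε0' : 0 < ε := by exact_mod_cast hε0
  have hcl := claim ε hε0'
  have h1 : (ε : ℝ) * (C + S) ≤ (ε : ℝ) * (C + S + 1) := by nlinarith
  have h2 : (ε : ℝ) * (C + S + 1) < S - C := by
    calc (ε : ℝ) * (C + S + 1) < ((S - C) / (C + S + 1)) * (C + S + 1) := by
          apply mul_lt_mul_of_pos_right hε1 (by linarith)
      _ = S - C := by field_simp
  nlinarith

end
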